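/- A quaternion matrix A is right invertible along B, C if and only if the outer inverse A^(2)_{T1,S1} with right range space T1 = R_r(B) and right null space S1 = N_r(C) exists, and in that case they coincide. -/

import Mathlib

open scoped Quaternion

noncomputable section

/-- The column right space of a quaternion matrix. -/
def Rr {m n : ℕ} (M : Matrix (Fin m) (Fin n) ℍ[ℝ]) : Set (Fin m → ℍ[ℝ]) :=
  {y | ∃ x, y = M.mulVec x}

/-- The right null space of a quaternion matrix. -/
def Nr {m n : ℕ} (M : Matrix (Fin m) (Fin n) ℍ[ℝ]) : Set (Fin n → ℍ[ℝ]) :=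
  {x | M.mulVec x = 0}

/-- If the column space of `Q` is contained in that of `P`, then `Q` factors as `P * M`. -/
lemma exists_factor_col {m n p : ℕ} (P : Matrix (Fin m) (Fin n) ℍ[ℝ])
    (Q : Matrix (Fin m) (Fin p) ℍ[ℝ]) (h : Rr Q ⊆ Rr P) :
    ∃ M : Matrix (Fin n) (Fin p) ℍ[ℝ], Q = P * M := by
  have hcol : ∀ j : Fin p, ∃ x : Fin n → ℍ[ℝ],
      Q.mulVec (Pi.single j 1) = P.mulVec x := by
    intro j
    exact h ⟨Pi.single j 1, rfl⟩
  choose f hf using hcol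
  refine ⟨Matrix.of fun i j => f j i, ?_⟩
  refine Matrix.ext fun i j => ?_
  have := congrFun (hf j) i
  simp only [Matrix.mulVec_single, MulOpposite.op_one, one_smul, Matrix.col_apply] at this
  rw [this]
  simp [Matrix.mul_apply, Matrix.mulVec, dotProduct]

/-- A nonzero linear functional vanishing on a submodule not containing `r`. -/
lemma exists_functional {n : ℕ} (S : Submodule ℍ[ℝ] (Fin n → ℍ[ℝ]))
    (r : Fin n → ℍ[ℝ]) (hr : r ∉ S) :
    ∃ φ : (Fin n → ℍ[ℝ]) →ₗ[ℍ[ℝ]] ℍ[ℝ], (∀ s ∈ S, φ s = 0) ∧ φ r ≠ 0 := by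
  set π := S.mkQ with hπ
  have hq : π r ≠ 0 := by
    simpa [hπ, Submodule.Quotient.mk_eq_zero] using hr
  set e := LinearEquiv.toSpanNonzeroSingleton ℍ[ℝ] _ (π r) hq with he
  obtain ⟨g, hg⟩ := LinearMap.exists_extend (e.symm : (ℍ[ℝ] ∙ (π r)) →ₗ[ℍ[ℝ]] ℍ[ℝ])
  refine ⟨g.comp π, ?_, ?_⟩
  · intro s hs
    have : π s = 0 := by simp [hπ, Submodule.Quotient.mk_eq_zero, hs]
    simp [LinearMap.comp_apply, this]
  · have hmem : π r ∈ (ℍ[ℝ] ∙ (π r)) := Submodule.mem_span_singleton_self _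
    have h1 : g (π r) = e.symm ⟨π r, hmem⟩ := by
      have := congrFun (congrArg (fun f => f.toFun) hg) ⟨π r, hmem⟩
      simpa using this
    have h2 : e 1 = ⟨π r, hmem⟩ := by
      apply Subtype.ext
      simp [he, LinearEquiv.toSpanNonzeroSingleton_apply]
    have : e.symm ⟨π r, hmem⟩ = 1 := by rw [← h2, LinearEquiv.symm_apply_apply]
    simp [LinearMap.comp_apply, h1, this]

/-- If the right null space of `C` is contained in that of `X`, then `X` factors as `Y * C`. -/
lemma exists_factor_row {n1 n2 k : ℕ} (C : Matrix (Fin k) (Fin n1) ℍ[ℝ])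
    (X : Matrix (Fin n2) (Fin n1) ℍ[ℝ]) (h : Nr C ⊆ Nr X) :
    ∃ Y : Matrix (Fin n2) (Fin k) ℍ[ℝ], X = Y * C := by
  -- the linear map y ↦ y ᵥ* C
  let T : (Fin k → ℍ[ℝ]) →ₗ[ℍ[ℝ]] (Fin n1 → ℍ[ℝ]) :=
    { toFun := fun y => Matrix.vecMul y C
      map_add' := fun x y => Matrix.add_vecMul C x y
      map_smul' := fun c y => Matrix.smul_vecMul c y C }
  have hrow : ∀ i : Fin n2, X i ∈ LinearMap.range T := by
    intro i
    by_contra hri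
    obtain ⟨φ, hφ0, hφne⟩ := exists_functional (LinearMap.range T) (X i) hri
    set v : Fin n1 → ℍ[ℝ] := fun j => φ (Pi.single j 1) with hv
    have key : ∀ {m : ℕ} (M : Matrix (Fin m) (Fin n1) ℍ[ℝ]) (a : Fin m),
        M.mulVec v a = φ (M a) := by
      intro m M a
      have : M a = ∑ j, M a j • (Pi.single j 1 : Fin n1 → ℍ[ℝ]) := by
        funext b
        simp [Pi.single_apply, Finset.sum_apply, smul_eq_mul]
      rw [this, map_sum]
      simp only [map_smul, smul_eq_mul]
      rfl
    have hCv : C.mulVec v = 0 := by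
      funext a
      rw [key C a]
      exact hφ0 (C a) ⟨Pi.single a 1, by simp [T]; rfl⟩
    have hXv : X.mulVec v = 0 := h hCv
    have := congrFun hXv i
    rw [key X i] at this
    exact hφne this
  choose y hy using hrow
  refine ⟨Matrix.of fun i m => y i m, ?_⟩
  refine Matrix.ext fun i j => ?_
  have := congrFun (hy i) j
  simp only [T, LinearMap.coe_mk, AddHom.coe_mk] at this
  rw [← this]
  simp [Matrix.mul_apply, Matrix.vecMul, dotProduct]

/-- If `X A X = X` and the right null space of `X` is contained in that of `C`,
then `C A X = C`. -/
lemma CAX_eq {n1 n2 k : ℕ} (A : Matrix (Fin n1) (Fin n2) ℍ[ℝ])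
    (C : Matrix (Fin k) (Fin n1) ℍ[ℝ]) (X : Matrix (Fin n2) (Fin n1) ℍ[ℝ])
    (hX : X * A * X = X) (h : Nr X ⊆ Nr C) : C * A * X = C := by
  refine Matrix.ext fun i j => ?_
  set v : Fin n1 → ℍ[ℝ] := Pi.single j 1 with hv
  set w : Fin n1 → ℍ[ℝ] := v - (A * X).mulVec v with hw
  have hXw : X.mulVec w = 0 := by
    rw [hw, Matrix.mulVec_sub, Matrix.mulVec_mulVec, ← Matrix.mul_assoc, hX, sub_self]
  have hCw : C.mulVec w = 0 := h hXw
  have : C.mulVec v = (C * (A * X)).mulVec v := by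
    rw [hw, Matrix.mulVec_sub] at hCw
    rw [← Matrix.mulVec_mulVec]
    exact (sub_eq_zero.mp hCw)
  have := congrFun this i
  simpa [hv, Matrix.mul_assoc] using this.symm

theorem right_inverse_along_iff_outer_inverse {n1 n2 l k : ℕ}
    (A : Matrix (Fin n1) (Fin n2) ℍ[ℝ]) (B : Matrix (Fin n2) (Fin l) ℍ[ℝ])
    (C : Matrix (Fin k) (Fin n1) ℍ[ℝ]) :
    ((∃ (Z : Matrix (Fin n2) (Fin n1) ℍ[ℝ]) (X1 : Matrix (Fin l) (Fin n1) ℍ[ℝ])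
        (Y1 : Matrix (Fin n2) (Fin k) ℍ[ℝ]),
        Z * A * B = B ∧ C * A * Z = C ∧ Z = B * X1 ∧ Z = Y1 * C) ↔
      (∃ X : Matrix (Fin n2) (Fin n1) ℍ[ℝ], X * A * X = X ∧ Rr X = Rr B ∧ Nr X = Nr C)) ∧
    (∀ (Z : Matrix (Fin n2) (Fin n1) ℍ[ℝ]) (X1 : Matrix (Fin l) (Fin n1) ℍ[ℝ])
        (Y1 : Matrix (Fin n2) (Fin k) ℍ[ℝ]) (X : Matrix (Fin n2) (Fin n1) ℍ[ℝ]),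
        Z * A * B = B → C * A * Z = C → Z = B * X1 → Z = Y1 * C →
        X * A * X = X → Rr X = Rr B → Nr X = Nr C → Z = X) := by
  constructor
  · constructor
    · rintro ⟨Z, X1, Y1, hZAB, hCAZ, hZB, hZC⟩
      refine ⟨Z, ?_, ?_, ?_⟩
      · calc Z * A * Z = Z * A * (B * X1) := by rw [← hZB]
          _ = (Z * A * B) * X1 := by simp only [Matrix.mul_assoc]
          _ = B * X1 := by rw [hZAB]
          _ = Z := hZB.symm
      · apply Set.Subset.antisymm
        · rintro y ⟨x, rfl⟩
          exact ⟨X1.mulVec x, by rw [hZB, ← Matrix.mulVec_mulVec]⟩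
        · rintro y ⟨x, rfl⟩
          exact ⟨(A * B).mulVec x, by
            rw [Matrix.mulVec_mulVec, ← Matrix.mul_assoc, hZAB]⟩
      · apply Set.Subset.antisymm
        · intro v hv
          show C.mulVec v = 0
          rw [← hCAZ, ← Matrix.mulVec_mulVec, hv, Matrix.mulVec_zero]
        · intro v hv
          show Z.mulVec v = 0
          rw [hZC, ← Matrix.mulVec_mulVec, hv, Matrix.mulVec_zero]
    · rintro ⟨X, hXAX, hRr, hNr⟩
      obtain ⟨X1, hX1⟩ := exists_factor_col B X (hRr.le)
      obtain ⟨Y1, hY1⟩ := exists_factor_row C X (hNr.ge)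
      obtain ⟨M, hM⟩ := exists_factor_col X B (hRr.ge)
      refine ⟨X, X1, Y1, ?_, CAX_eq A C X hXAX hNr.le, hX1, hY1⟩
      calc X * A * B = X * A * (X * M) := by rw [← hM]
        _ = (X * A * X) * M := by simp only [Matrix.mul_assoc]
        _ = X * M := by rw [hXAX]
        _ = B := hM.symm
  · intro Z X1 Y1 X hZAB hCAZ hZB hZC hXAX hRr hNr
    obtain ⟨N, hN⟩ := exists_factor_col B X (hRr.le)
    have hCAX : C * A * X = C := CAX_eq A C X hXAX hNr.le
    have hZAX : Z * A * X = X := by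
      calc Z * A * X = Z * A * (B * N) := by rw [← hN]
        _ = (Z * A * B) * N := by simp only [Matrix.mul_assoc]
        _ = B * N := by rw [hZAB]
        _ = X := hN.symm
    calc Z = Y1 * C := hZC
      _ = Y1 * (C * A * X) := by rw [hCAX]
      _ = (Y1 * C) * A * X := by simp only [Matrix.mul_assoc]
      _ = Z * A * X := by rw [← hZC]
      _ = X := hZAX
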